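/- Define a sequence a_1 = 1 and a_n = 1/(1 + (n-1)·a_{n-1}) for n ≥ 2. Then the sequence (n·a_n) is weakly increasing: n·a_n ≤ (n+1)·a_{n+1} for all n ≥ 1; equivalently a_n ≤ ((n+1)/n)·a_{n+1}. -/

import Mathlib

lemma key (a : ℕ → ℝ) (h1 : a 1 = 1)
    (hrec : ∀ n, 2 ≤ n → a n = 1 / (1 + ((n : ℝ) - 1) * a (n - 1))) :
    ∀ n : ℕ, 1 ≤ n → 0 < a n ∧
      (n : ℝ) ≤ ((n : ℝ) * a n) ^ 2 + (n : ℝ) * a n ∧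
      ((n : ℝ) * a n) ^ 2 + (n : ℝ) * a n ≤ (n : ℝ) + 1 := by
  intro n hn
  induction n with
  | zero => omega
  | succ n ih =>
    rcases Nat.eq_or_lt_of_le hn with h | h
    · simp [← h, h1]
    · have hn1 : 1 ≤ n := by omega
      obtain ⟨hpos, hlo, hhi⟩ := ih hn1
      have hb : a (n + 1) = 1 / (1 + ((n : ℝ)) * a n) := by
        have := hrec (n + 1) (by omega)
        simpa using this
      set b : ℝ := (n : ℝ) * a n with hbdef
      have hbpos : 0 < b := by
        have : (0:ℝ) < (n:ℝ) := by exact_mod_cast hn1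
        positivity
      have hden : 0 < 1 + b := by linarith
      have ha1 : 0 < a (n + 1) := by rw [hb]; positivity
      have e : (((n:ℝ)+1) * (1 / (1 + b))) ^ 2 + ((n:ℝ)+1) * (1 / (1 + b))
          = (((n:ℝ)+1)^2 + ((n:ℝ)+1)*(1+b)) / (1+b)^2 := by
        field_simp
      refine ⟨ha1, ?_, ?_⟩
      · rw [hb]; push_cast
        rw [e, le_div_iff₀ (by positivity)]
        nlinarith [sq_nonneg b, sq_nonneg (1+b)]
      · rw [hb]; push_cast
        rw [e, div_le_iff₀ (by positivity)]
        nlinarith [sq_nonneg b, sq_nonneg (1+b)]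

/-- For the sequence `a 1 = 1`, `a n = 1 / (1 + (n-1) * a (n-1))` for `n ≥ 2`,
the sequence `n * a n` is weakly increasing. -/
theorem stmt1 (a : ℕ → ℝ) (h1 : a 1 = 1)
    (hrec : ∀ n, 2 ≤ n → a n = 1 / (1 + ((n : ℝ) - 1) * a (n - 1))) :
    ∀ n : ℕ, 1 ≤ n → (n : ℝ) * a n ≤ ((n : ℕ) + 1 : ℝ) * a (n + 1) := by
  intro n hn
  obtain ⟨hpos, hlo, hhi⟩ := key a h1 hrec n hn
  have hb : a (n + 1) = 1 / (1 + ((n : ℝ)) * a n) := by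
    have := hrec (n + 1) (by omega)
    simpa using this
  have hnpos : (0:ℝ) < (n:ℝ) := by exact_mod_cast hn
  have hbpos : 0 < (n:ℝ) * a n := by positivity
  have hden : 0 < 1 + (n:ℝ) * a n := by linarith
  rw [hb, mul_one_div, le_div_iff₀ hden]
  nlinarith
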